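/- For every S ⊆ B with 0 < π(S) < 1, the quantity ⟨ψ| 1_S H 1_{B∖S} |ψ⟩ is a real number and the spectral gap satisfies Δ_H ≤ (−⟨ψ| 1_S H 1_{B∖S} |ψ⟩)/(π(S)·π(B∖S)). -/

import Mathlib

open scoped BigOperators ComplexOrder

/-- The ℓ²-operator norm of a matrix over ℂ. -/
noncomputable def opNorm {B : Type*} [Fintype B] [DecidableEq B] (H : Matrix B B ℂ) : ℝ :=
  ‖Matrix.toEuclideanCLM (𝕜 := ℂ) H‖

/-- The ground-state probability measure of a subset `S`. -/
noncomputable def piS {B : Type*} (ψ : B → ℂ) (S : Finset B) : ℝ :=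
  ∑ z ∈ S, ‖ψ z‖ ^ 2

open scoped Classical in
/-- The interior boundary `∂S` of the set `S` with respect to the matrix `H`. -/
noncomputable def bdry {B : Type*} [Fintype B] (H : Matrix B B ℂ) (S : Finset B) : Finset B :=
  S.filter (fun x => ∃ y ∉ S, H x y ≠ 0)

/-- Theorem 3 of the paper (Hamiltonian conductance upper bound): for any `S` with
`0 < π(S) < 1`, the quantity `⟨ψ|1_S H 1_{B∖S}|ψ⟩` is real, and
`Δ_H ≤ -⟨ψ|1_S H 1_{B∖S}|ψ⟩ / (π(S)π(B∖S))`. -/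


lemma conj_mul_self' (z : ℂ) : (starRingEnd ℂ) z * z = ((‖z‖ ^ 2 : ℝ) : ℂ) := by
  rw [mul_comm, Complex.mul_conj]
  norm_cast
  rw [Complex.normSq_eq_norm_sq]

open scoped BigOperators ComplexOrder

lemma gap_aux {B : Type*} [Fintype B] [DecidableEq B]
    (H : Matrix B B ℂ) (hH : H.IsHermitian)
    (E : ℕ → ℝ) (hmono : Monotone E)
    (henum : ∃ σ : Fin (Fintype.card B) ≃ B,
      ∀ i : Fin (Fintype.card B), E i = hH.eigenvalues (σ i))
    (ψ u : EuclideanSpace ℂ B) (hψ : ψ ≠ 0)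
    (hground : H.mulVec ψ = (E 0 : ℂ) • (ψ : B → ℂ))
    (horth : (inner ℂ ψ u : ℂ) = 0) :
    E 1 * ‖u‖ ^ 2 ≤ (inner ℂ u (Matrix.toEuclideanLin H u) : ℂ).re := by
  obtain ⟨σ, hσ⟩ := henum
  set b := hH.eigenvectorBasis with hb
  set μ := hH.eigenvalues with hμ
  set T := Matrix.toEuclideanLin H with hT
  have hTb : ∀ j, T (b j) = (μ j : ℂ) • b j := by
    intro j
    have h1 := hH.mulVec_eigenvectorBasis j
    apply (WithLp.equiv 2 (B → ℂ)).injective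
    funext x
    have := congrFun h1 x
    simpa [hT, Matrix.toEuclideanLin_apply] using this
  have hrepr : ∀ (v : EuclideanSpace ℂ B) (j : B),
      b.repr (T v) j = (μ j : ℂ) * b.repr v j := by
    intro v j
    have hv := (b.sum_repr v).symm
    rw [b.repr_apply_apply]
    conv_lhs => rw [hv]
    rw [map_sum]
    simp_rw [map_smul]
    simp_rw [hTb]
    simp_rw [inner_sum]
    simp_rw [inner_smul_right]
    have hite : ∀ i : B, (inner ℂ (b j) (b i) : ℂ) = if j = i then 1 else 0 := by
      intro i
      exact orthonormal_iff_ite.mp b.orthonormal j i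
    simp_rw [hite, mul_ite, mul_one, mul_zero, Finset.sum_ite_eq, Finset.mem_univ, if_true]
    ring
  have hparseval : ∀ v w : EuclideanSpace ℂ B,
      (inner ℂ v w : ℂ) = ∑ j, (starRingEnd ℂ) (b.repr v j) * b.repr w j := by
    intro v w
    rw [← b.repr.inner_map_map v w]
    simp only [PiLp.inner_apply, RCLike.inner_apply']
  have hnorm : ‖u‖ ^ 2 = ∑ j, ‖b.repr u j‖ ^ 2 := by
    rw [← b.repr.norm_map u, EuclideanSpace.norm_eq, Real.sq_sqrt (by positivity)]
  have hTu : (inner ℂ u (T u) : ℂ).re = ∑ j, μ j * ‖b.repr u j‖ ^ 2 := by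
    rw [hparseval]
    have hterm : ∀ j, (starRingEnd ℂ) (b.repr u j) * b.repr (T u) j
        = ((μ j * ‖b.repr u j‖ ^ 2 : ℝ) : ℂ) := by
      intro j
      rw [hrepr]
      push_cast
      rw [mul_comm ((starRingEnd ℂ) (b.repr u j)) _, mul_assoc, mul_comm (b.repr u j) _,
        conj_mul_self']
      push_cast
      ring
    simp_rw [hterm]
    rw [← Complex.ofReal_sum, Complex.ofReal_re]
  have hψd : ∀ j, (μ j : ℂ) * b.repr ψ j = (E 0 : ℂ) * b.repr ψ j := by
    intro j
    have h1 : T ψ = (E 0 : ℂ) • ψ := by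
      apply (WithLp.equiv 2 (B → ℂ)).injective
      funext x
      simpa [hT, Matrix.toEuclideanLin_apply] using congrFun hground x
    have h2 := hrepr ψ j
    rw [h1, map_smul] at h2
    rw [← h2, PiLp.smul_apply, smul_eq_mul]
  have horth' : ∑ j, (starRingEnd ℂ) (b.repr ψ j) * b.repr u j = 0 := by
    rw [← hparseval]; exact horth
  have hμE : ∀ j, μ j = E ((σ.symm j : Fin (Fintype.card B)) : ℕ) := by
    intro j
    have := hσ (σ.symm j)
    rw [Equiv.apply_symm_apply] at this
    exact this.symm
  have key : ∀ j, E 1 * ‖b.repr u j‖ ^ 2 ≤ μ j * ‖b.repr u j‖ ^ 2 := by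
    intro j
    rcases le_or_gt (E 1) (E 0) with hE | hE
    · have h0 : E 0 ≤ μ j := by rw [hμE j]; exact hmono (Nat.zero_le _)
      nlinarith [sq_nonneg ‖b.repr u j‖]
    · by_cases hij : ((σ.symm j : Fin (Fintype.card B)) : ℕ) = 0
      · -- j is the unique ground index; show b.repr u j = 0
        have hd0 : ∀ k, k ≠ j → b.repr ψ k = 0 := by
          intro k hk
          have hik : ((σ.symm k : Fin (Fintype.card B)) : ℕ) ≠ 0 := by
            intro h0
            exact hk (σ.symm.injective (Fin.ext (by rw [h0, hij])))
          have hμk : E 1 ≤ μ k := by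
            rw [hμE k]; exact hmono (Nat.one_le_iff_ne_zero.mpr hik)
          have h2 : ((μ k : ℂ) - (E 0 : ℂ)) * b.repr ψ k = 0 := by
            have := hψd k; ring_nf; linear_combination this
          rcases mul_eq_zero.mp h2 with h | h
          · exfalso
            have : (μ k : ℂ) = (E 0 : ℂ) := by linear_combination h
            have : μ k = E 0 := by exact_mod_cast this
            linarith
          · exact h
        have hdj : b.repr ψ j ≠ 0 := by
          intro h0
          apply hψ
          apply b.repr.map_eq_zero_iff.mp
          apply (WithLp.equiv 2 (B → ℂ)).injective
          funext k
          by_cases hk : k = j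
          · subst hk; simpa using h0
          · simpa using hd0 k hk
        have hcj : b.repr u j = 0 := by
          have h3 := horth'
          rw [Finset.sum_eq_single j (fun k _ hk => by rw [hd0 k hk]; simp)
            (fun h => absurd (Finset.mem_univ j) h)] at h3
          rcases mul_eq_zero.mp h3 with h | h
          · exact absurd (by simpa using h) hdj
          · exact h
        rw [hcj]
        simp
      · have hμk : E 1 ≤ μ j := by
          rw [hμE j]; exact hmono (Nat.one_le_iff_ne_zero.mpr hij)
        nlinarith [sq_nonneg ‖b.repr u j‖]
  calc E 1 * ‖u‖ ^ 2 = ∑ j, E 1 * ‖b.repr u j‖ ^ 2 := by rw [hnorm, Finset.mul_sum]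
    _ ≤ ∑ j, μ j * ‖b.repr u j‖ ^ 2 := Finset.sum_le_sum (fun j _ => key j)
    _ = _ := hTu.symm

lemma conj_block {B : Type*} [Fintype B] (H : Matrix B B ℂ) (hH : H.IsHermitian)
    (ψ : B → ℂ) (X Y : Finset B) :
    (starRingEnd ℂ) (∑ x ∈ X, ∑ y ∈ Y, (starRingEnd ℂ) (ψ x) * H x y * ψ y)
      = ∑ x ∈ Y, ∑ y ∈ X, (starRingEnd ℂ) (ψ x) * H x y * ψ y := by
  rw [map_sum]
  simp_rw [map_sum, map_mul, Complex.conj_conj]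
  rw [Finset.sum_comm]
  refine Finset.sum_congr rfl fun y _ => Finset.sum_congr rfl fun x _ => ?_
  have hxy : (starRingEnd ℂ) (H x y) = H y x := hH.apply y x
  rw [hxy]
  ring

theorem stmt_2' {B : Type*} [Fintype B] [DecidableEq B]
    (H : Matrix B B ℂ) (hH : H.IsHermitian)
    (E : ℕ → ℝ) (hmono : Monotone E)
    (henum : ∃ σ : Fin (Fintype.card B) ≃ B,
      ∀ i : Fin (Fintype.card B), E i = hH.eigenvalues (σ i))
    (ψ : B → ℂ) (hψnorm : ∑ z, ‖ψ z‖ ^ 2 = 1)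
    (hground : H.mulVec ψ = (E 0 : ℂ) • ψ)
    (S : Finset B) (hS0 : 0 < piS ψ S) (hS1 : piS ψ S < 1) :
    (∑ x ∈ S, ∑ y ∈ Sᶜ, (starRingEnd ℂ) (ψ x) * H x y * ψ y).im = 0 ∧
    E 1 - E 0 ≤
      (-(∑ x ∈ S, ∑ y ∈ Sᶜ, (starRingEnd ℂ) (ψ x) * H x y * ψ y).re) /
        (piS ψ S * piS ψ Sᶜ) := by
  classical
  set p : ℝ := piS ψ S with hpdef
  set q : ℝ := piS ψ Sᶜ with hqdef
  set t : B → B → ℂ := fun x y => (starRingEnd ℂ) (ψ x) * H x y * ψ y with ht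
  set A : ℂ := ∑ x ∈ S, ∑ y ∈ Sᶜ, t x y with hA
  set W1 : ℂ := ∑ x ∈ S, ∑ y ∈ S, t x y with hW1
  set W3 : ℂ := ∑ x ∈ Sᶜ, ∑ y ∈ S, t x y with hW3
  set W4 : ℂ := ∑ x ∈ Sᶜ, ∑ y ∈ Sᶜ, t x y with hW4
  have hpq1 : p + q = 1 := by
    rw [hpdef, hqdef]
    unfold piS
    rw [Finset.sum_add_sum_compl]
    exact hψnorm
  have hq0 : 0 < q := by linarith
  have hpq : 0 < p * q := mul_pos hS0 hq0
  have hqe : q = 1 - p := by linarith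
  have hPS : ∑ z ∈ S, (starRingEnd ℂ) (ψ z) * ψ z = (p : ℂ) := by
    simp_rw [conj_mul_self']
    rw [← Complex.ofReal_sum]
    norm_cast
  have hPSc : ∑ z ∈ Sᶜ, (starRingEnd ℂ) (ψ z) * ψ z = (q : ℂ) := by
    simp_rw [conj_mul_self']
    rw [← Complex.ofReal_sum]
    norm_cast
  have hrow : ∀ x, ∑ y, H x y * ψ y = (E 0 : ℂ) * ψ x := by
    intro x
    have := congrFun hground x
    simpa [Matrix.mulVec, dotProduct] using this
  have hrowS : ∀ (X : Finset B), ∑ x ∈ X, ∑ y ∈ S, t x y + ∑ x ∈ X, ∑ y ∈ Sᶜ, t x y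
      = (E 0 : ℂ) * ∑ z ∈ X, (starRingEnd ℂ) (ψ z) * ψ z := by
    intro X
    rw [← Finset.sum_add_distrib, Finset.mul_sum]
    refine Finset.sum_congr rfl fun x _ => ?_
    rw [Finset.sum_add_sum_compl S (t x)]
    have : ∑ y, t x y = (starRingEnd ℂ) (ψ x) * ∑ y, H x y * ψ y := by
      rw [Finset.mul_sum]
      exact Finset.sum_congr rfl fun y _ => by rw [ht]; ring
    rw [this, hrow x]
    ring
  have hR1 : W1 + A = (E 0 : ℂ) * (p : ℝ) := by rw [hW1, hA, hrowS S, hPS]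
  have hR2 : W3 + W4 = (E 0 : ℂ) * (q : ℝ) := by rw [hW3, hW4, hrowS Sᶜ, hPSc]
  have hconjA : (starRingEnd ℂ) A = W3 := conj_block H hH ψ S Sᶜ
  have hconjW1 : (starRingEnd ℂ) W1 = W1 := conj_block H hH ψ S S
  have hW1im : W1.im = 0 := Complex.conj_eq_iff_im.mp hconjW1
  have hAim : A.im = 0 := by
    have hAeq : A = (E 0 : ℂ) * (p : ℝ) - W1 := by linear_combination hR1
    rw [hAeq]
    simp [Complex.sub_im, Complex.mul_im, hW1im]
  refine ⟨hAim, ?_⟩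
  have hW3A : W3 = A := by
    rw [← hconjA, Complex.conj_eq_iff_im.mpr hAim]
  -- the test vector
  set a : B → ℝ := fun z => if z ∈ S then 1 - p else -p with ha
  have haS : ∀ z ∈ S, a z = 1 - p := fun z hz => by rw [ha]; simp [hz]
  have haSc : ∀ z ∈ Sᶜ, a z = -p := fun z hz => by
    rw [ha]; simp [Finset.mem_compl.mp hz]
  set u : EuclideanSpace ℂ B := WithLp.toLp 2 (fun z => ((a z : ℝ) : ℂ) * ψ z) with hu
  set ψE : EuclideanSpace ℂ B := WithLp.toLp 2 ψ with hψE
  have hψne : ψE ≠ 0 := by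
    intro h
    apply one_ne_zero (α := ℝ)
    rw [← hψnorm]
    apply Finset.sum_eq_zero
    intro z _
    have hz0 : ψ z = 0 := by
      have := congrArg (fun v : EuclideanSpace ℂ B => v z) h
      simpa [hψE] using this
    rw [hz0]
    simp
  have horth : (inner ℂ ψE u : ℂ) = 0 := by
    simp only [PiLp.inner_apply, RCLike.inner_apply']
    have hterm : ∀ z, (starRingEnd ℂ) (ψE z) * u z
        = ((a z : ℝ) : ℂ) * ((starRingEnd ℂ) (ψ z) * ψ z) := by
      intro z
      simp only [hu, hψE, PiLp.toLp_apply]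
      ring
    simp_rw [hterm]
    rw [← Finset.sum_add_sum_compl S]
    have h1 : ∑ z ∈ S, ((a z : ℝ) : ℂ) * ((starRingEnd ℂ) (ψ z) * ψ z)
        = ((1 - p : ℝ) : ℂ) * (p : ℝ) := by
      rw [← hPS, Finset.mul_sum]
      exact Finset.sum_congr rfl fun z hz => by rw [haS z hz]
    have h2 : ∑ z ∈ Sᶜ, ((a z : ℝ) : ℂ) * ((starRingEnd ℂ) (ψ z) * ψ z)
        = ((-p : ℝ) : ℂ) * (q : ℝ) := by
      rw [← hPSc, Finset.mul_sum]
      exact Finset.sum_congr rfl fun z hz => by rw [haSc z hz]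
    rw [h1, h2, hqe]
    push_cast
    ring
  have hnormu : ‖u‖ ^ 2 = p * q := by
    have h0 : ‖u‖ ^ 2 = ∑ z, ‖u z‖ ^ 2 := by
      rw [EuclideanSpace.norm_eq, Real.sq_sqrt (by positivity)]
    have hterm : ∀ z, ‖u z‖ ^ 2 = (a z) ^ 2 * ‖ψ z‖ ^ 2 := by
      intro z
      rw [hu]
      simp only [PiLp.toLp_apply, norm_mul, mul_pow, Complex.norm_real]
      rw [Real.norm_eq_abs, sq_abs]
    rw [h0]
    simp_rw [hterm]
    rw [← Finset.sum_add_sum_compl S]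
    have hpsum : ∑ z ∈ S, ‖ψ z‖ ^ 2 = p := by rw [hpdef]; rfl
    have hqsum : ∑ z ∈ Sᶜ, ‖ψ z‖ ^ 2 = q := by rw [hqdef]; rfl
    have h1 : ∑ z ∈ S, (a z) ^ 2 * ‖ψ z‖ ^ 2 = (1 - p) ^ 2 * p := by
      have h1' : ∑ z ∈ S, (a z) ^ 2 * ‖ψ z‖ ^ 2 = (1 - p) ^ 2 * ∑ z ∈ S, ‖ψ z‖ ^ 2 := by
        rw [Finset.mul_sum]
        exact Finset.sum_congr rfl fun z hz => by rw [haS z hz]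
      rw [h1', hpsum]
    have h2 : ∑ z ∈ Sᶜ, (a z) ^ 2 * ‖ψ z‖ ^ 2 = p ^ 2 * q := by
      have h2' : ∑ z ∈ Sᶜ, (a z) ^ 2 * ‖ψ z‖ ^ 2 = p ^ 2 * ∑ z ∈ Sᶜ, ‖ψ z‖ ^ 2 := by
        rw [Finset.mul_sum]
        refine Finset.sum_congr rfl fun z hz => by rw [haSc z hz]; ring
      rw [h2', hqsum]
    rw [h1, h2, hqe]
    ring
  have hsplit : ∀ (g : B → B → ℂ), ∑ x, ∑ y, g x y
      = ((∑ x ∈ S, ∑ y ∈ S, g x y + ∑ x ∈ S, ∑ y ∈ Sᶜ, g x y)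
        + (∑ x ∈ Sᶜ, ∑ y ∈ S, g x y + ∑ x ∈ Sᶜ, ∑ y ∈ Sᶜ, g x y)) := by
    intro g
    rw [← Finset.sum_add_sum_compl S (fun x => ∑ y, g x y)]
    congr 1 <;>
    · rw [← Finset.sum_add_distrib]
      exact Finset.sum_congr rfl fun x _ => (Finset.sum_add_sum_compl S (g x)).symm
  have hinner : (inner ℂ u (Matrix.toEuclideanLin H u) : ℂ)
      = ((E 0 * (p * q) : ℝ) : ℂ) - A := by
    have hexp : (inner ℂ u (Matrix.toEuclideanLin H u) : ℂ)
        = ∑ x, ∑ y, ((a x : ℝ) : ℂ) * ((a y : ℝ) : ℂ) * t x y := by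
      simp only [PiLp.inner_apply, RCLike.inner_apply', Matrix.toEuclideanLin_apply]
      refine Finset.sum_congr rfl fun x _ => ?_
      have : H.mulVec (WithLp.ofLp u) x
          = ∑ y, H x y * u y := rfl
      rw [this, Finset.mul_sum]
      refine Finset.sum_congr rfl fun y _ => ?_
      rw [hu, ht]
      simp only [PiLp.toLp_apply, map_mul, Complex.conj_ofReal]
      try ring
    have hblk : ∀ (X Y : Finset B) (cx cy : ℝ), (∀ x ∈ X, a x = cx) → (∀ y ∈ Y, a y = cy) →
        ∑ x ∈ X, ∑ y ∈ Y, ((a x : ℝ) : ℂ) * ((a y : ℝ) : ℂ) * t x y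
          = ((cx : ℂ) * (cy : ℂ)) * ∑ x ∈ X, ∑ y ∈ Y, t x y := by
      intro X Y cx cy hx hy
      rw [Finset.mul_sum]
      refine Finset.sum_congr rfl fun x hxX => ?_
      rw [Finset.mul_sum]
      refine Finset.sum_congr rfl fun y hyY => ?_
      rw [hx x hxX, hy y hyY]
      try ring
    rw [hexp, hsplit, hblk S S _ _ haS haS, hblk S Sᶜ _ _ haS haSc,
      hblk Sᶜ S _ _ haSc haS, hblk Sᶜ Sᶜ _ _ haSc haSc]
    rw [← hW1, ← hA, ← hW3, ← hW4, hW3A]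
    have hW1e : W1 = (E 0 : ℂ) * (p : ℝ) - A := by linear_combination hR1
    have hW4e : W4 = (E 0 : ℂ) * (q : ℝ) - A := by
      have := hR2
      rw [hW3A] at this
      linear_combination this
    rw [hW1e, hW4e, hqe]
    push_cast
    ring
  have hgap := gap_aux H hH E hmono henum ψE u hψne hground horth
  rw [hnormu, hinner] at hgap
  have hre : (((E 0 * (p * q) : ℝ) : ℂ) - A).re = E 0 * (p * q) - A.re := by
    simp
  rw [hre] at hgap
  rw [le_div_iff₀ hpq]
  linarith

theorem stmt_2 {B : Type*} [Fintype B] [DecidableEq B]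
    (H : Matrix B B ℂ) (hH : H.IsHermitian)
    -- `E` enumerates the eigenvalues of `H` (with multiplicity) in increasing order:
    (E : ℕ → ℝ) (hmono : Monotone E)
    (henum : ∃ σ : Fin (Fintype.card B) ≃ B,
      ∀ i : Fin (Fintype.card B), E i = hH.eigenvalues (σ i))
    -- `ψ` is a unit-norm ground state:
    (ψ : B → ℂ) (hψnorm : ∑ z, ‖ψ z‖ ^ 2 = 1)
    (hground : H.mulVec ψ = (E 0 : ℂ) • ψ)
    (S : Finset B) (hS0 : 0 < piS ψ S) (hS1 : piS ψ S < 1) :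
    (∑ x ∈ S, ∑ y ∈ Sᶜ, (starRingEnd ℂ) (ψ x) * H x y * ψ y).im = 0 ∧
    E 1 - E 0 ≤
      (-(∑ x ∈ S, ∑ y ∈ Sᶜ, (starRingEnd ℂ) (ψ x) * H x y * ψ y).re) /
        (piS ψ S * piS ψ Sᶜ) := by
  exact stmt_2' H hH E hmono henum ψ hψnorm hground S hS0 hS1
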